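/- In the delay-tolerant system, the optimal number of activated channels m_t = argmax_{m≥0}{ -dm + (1-(1-μ)^m)(1 - J_{t-1}(1)) } is nonincreasing in the time-to-deadline: m_t ≤ m_{t-1} for all t, where J_t(1) is the value function of the previous statement. Equivalently: if J ≤ J' ≤ 1 are two terminal values and m(J) denotes the maximizer of g_J(m) = -dm + (1-(1-μ)^m)(1-J) over nonnegative integers m (ties broken by the rule m(J) = k iff (1-μ)^k μ < d/(1-J) < (1-μ)^{k-1} μ, and m(J)=0 iff μ < d/(1-J)), then m(J') ≤ m(J). -/
import Mathlib


/-- Delay-tolerant system: the optimal number of activated channels is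
nonincreasing in the value of the continuation. If `J ≤ J' ≤ 1` and `m(J)` is
the maximizer of `-dm + (1-(1-μ)^m)(1-J)` characterized by
`m(J) = 0` iff `μ < d/(1-J)` and, for `k ≥ 1`, `m(J) = k` iff
`(1-μ)^k μ < d/(1-J) < (1-μ)^{k-1} μ`, then `m(J') ≤ m(J)`. -/
theorem optimal_channels_antitone (d μ : ℝ) (hd0 : 0 < d) (hd1 : d ≤ 1)
    (hμ0 : 0 < μ) (hμ1 : μ < 1) (J J' : ℝ) (hJJ' : J ≤ J') (hJ'1 : J' ≤ 1)
    (mJ mJ' : ℕ)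
    (hmJ : (mJ = 0 ∧ μ < d / (1 - J)) ∨
      (1 ≤ mJ ∧ (1 - μ) ^ mJ * μ < d / (1 - J) ∧
        d / (1 - J) < (1 - μ) ^ (mJ - 1) * μ))
    (hmJ' : (mJ' = 0 ∧ μ < d / (1 - J')) ∨
      (1 ≤ mJ' ∧ (1 - μ) ^ mJ' * μ < d / (1 - J') ∧
        d / (1 - J') < (1 - μ) ^ (mJ' - 1) * μ)) :
    mJ' ≤ mJ := by
  have hμ1' : 0 ≤ 1 - μ := by linarith
  have h1J' : 0 < 1 - J' := by
    have hpos : 0 < d / (1 - J') := by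
      rcases hmJ' with ⟨_, h⟩ | ⟨_, h, _⟩
      · linarith
      · have : 0 < (1 - μ) ^ mJ' * μ := mul_pos (pow_pos (by linarith) _) hμ0
        linarith
    by_contra hc
    push_neg at hc
    have : d / (1 - J') ≤ 0 := div_nonpos_of_nonneg_of_nonpos hd0.le hc
    linarith
  have h1J : 0 < 1 - J := by linarith
  have hdiv : d / (1 - J) ≤ d / (1 - J') :=
    div_le_div_of_nonneg_left hd0.le h1J' (by linarith)
  by_contra hlt
  push_neg at hlt
  rcases hmJ' with ⟨h0, _⟩ | ⟨h1, _, hub⟩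
  · omega
  have hle : (1 - μ) ^ (mJ' - 1) ≤ (1 - μ) ^ mJ :=
    pow_le_pow_of_le_one hμ1' (by linarith) (by omega)
  rcases hmJ with ⟨h0, hJlb⟩ | ⟨_, hJlb, _⟩
  · have hpow : (1 - μ) ^ (mJ' - 1) ≤ 1 := pow_le_one₀ hμ1' (by linarith)
    have : (1 - μ) ^ (mJ' - 1) * μ ≤ μ := by nlinarith
    subst h0
    linarith
  · have : (1 - μ) ^ (mJ' - 1) * μ ≤ (1 - μ) ^ mJ * μ := by nlinarith
    linarith
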